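/- Given a dense G_δ subset 𝒢 of F_{ω,K} (with the completely metrizable topology generated by sets [(t,i)] of connections extending a finite initial segment (t,i) ∈ F_{L,K}) and a fixed (t,i) ∈ F_{L,K}, there exists an infinite block sequence (D_p) of finite subsets of ℕ with max D_p < min D_{p+1}, and surjections f_p : D_p → K, such that every (s,j) ∈ F_{ω,K} with (s↾L, j↾K) = (t,i) for which s extends infinitely many of the f_p belongs to 𝒢. -/

import Mathlib

def IsRigidSurjNat (K : ℕ) (t : ℕ → Fin K) : Prop :=
  Function.Surjective t ∧
    ∀ n : ℕ, ∃ m : ℕ, m ≤ K ∧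
      ∀ x : Fin K, ((x : ℕ) < m ↔ ∃ y : ℕ, y < n ∧ t y = x)

def IsConnectionNat (K : ℕ) (t : ℕ → Fin K) (i : Fin K → ℕ) : Prop :=
  IsRigidSurjNat K t ∧ (∀ x, t (i x) = x) ∧
    ∀ (x : Fin K) (y : ℕ), y ≤ i x → t y ≤ (x : ℕ)

def IsRigidSurjFin (L K : ℕ) (t : Fin L → Fin K) : Prop :=
  Function.Surjective t ∧
    ∀ n : ℕ, n ≤ L → ∃ m : ℕ, m ≤ K ∧
      ∀ x : Fin K, ((x : ℕ) < m ↔ ∃ y : Fin L, (y : ℕ) < n ∧ t y = x)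

def IsConnectionFin (L K : ℕ) (t : Fin L → Fin K) (i : Fin K → Fin L) : Prop :=
  IsRigidSurjFin L K t ∧ (∀ x, t (i x) = x) ∧
    ∀ (x : Fin K) (y : Fin L), y ≤ i x → t y ≤ x

/-- F_{ω,K}, topologized as a subspace of a product of discrete spaces; this
is the completely metrizable topology generated by the sets [(t,i)]. -/
def FOmega (K : ℕ) : Type :=
  { p : (ℕ → Fin K) × (Fin K → ℕ) // IsConnectionNat K p.1 p.2 }

instance (K : ℕ) : TopologicalSpace (FOmega K) :=
  inferInstanceAs (TopologicalSpace
    { p : (ℕ → Fin K) × (Fin K → ℕ) // IsConnectionNat K p.1 p.2 })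

private lemma fomega_conn (K L : ℕ) (hKL : K < L) (t : Fin L → Fin K)
    (i : Fin K → Fin L) (hti : IsConnectionFin L K t i)
    (s : ℕ → Fin K) (hs : ∀ y : ℕ, ∀ hy : y < L, s y = t ⟨y, hy⟩) :
    IsConnectionNat K s (fun x => ((i x : Fin L) : ℕ)) := by
  obtain ⟨⟨hsurj, hrig⟩, hsec, hmon⟩ := hti
  refine ⟨⟨?_, ?_⟩, ?_, ?_⟩
  · intro x
    obtain ⟨y, hy⟩ := hsurj x
    exact ⟨y, by rw [hs y y.isLt]; simpa using hy⟩
  · intro n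
    by_cases hn : n ≤ L
    · obtain ⟨m, hm, hiff⟩ := hrig n hn
      refine ⟨m, hm, fun x => (hiff x).trans ?_⟩
      constructor
      · rintro ⟨y, hy, rfl⟩
        exact ⟨y, hy, by rw [hs y y.isLt]⟩
      · rintro ⟨y, hy, hv⟩
        have hyL : y < L := lt_of_lt_of_le hy hn
        exact ⟨⟨y, hyL⟩, hy, by rw [← hs y hyL]; exact hv⟩
    · refine ⟨K, le_rfl, fun x => ?_⟩
      simp only [x.isLt, true_iff]
      obtain ⟨y, hy⟩ := hsurj x
      exact ⟨y, lt_trans y.isLt (lt_of_not_ge hn), by rw [hs y y.isLt]; simpa using hy⟩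
  · intro x
    rw [hs _ (i x).isLt]
    simpa using hsec x
  · intro x y hy
    have hyL : y < L := lt_of_le_of_lt hy (i x).isLt
    rw [hs y hyL]
    exact hmon x ⟨y, hyL⟩ hy

private lemma fomega_cyl_isOpen (K : ℕ) (N : ℕ) (s0 : ℕ → Fin K) (v : Fin K → ℕ) :
    IsOpen {sj : FOmega K | (∀ n < N, sj.1.1 n = s0 n) ∧ sj.1.2 = v} := by
  have he : {sj : FOmega K | (∀ n < N, sj.1.1 n = s0 n) ∧ sj.1.2 = v}
      = (Subtype.val : FOmega K → (ℕ → Fin K) × (Fin K → ℕ)) ⁻¹'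
        (({g : ℕ → Fin K | ∀ n < N, g n = s0 n}) ×ˢ ({v} : Set (Fin K → ℕ))) := rfl
  rw [he]
  refine IsOpen.preimage continuous_subtype_val ?_
  refine IsOpen.prod ?_ (isOpen_discrete _)
  have h2 : {g : ℕ → Fin K | ∀ n < N, g n = s0 n}
      = ⋂ n ∈ Finset.range N, (fun g : ℕ → Fin K => g n) ⁻¹' {s0 n} := by
    ext g; simp
  rw [h2]
  exact isOpen_biInter_finset fun n _ =>
    (isOpen_discrete _).preimage (continuous_apply n)

private lemma fomega_exists_cyl (K : ℕ) (V : Set (FOmega K)) (hV : IsOpen V)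
    (sj : FOmega K) (h : sj ∈ V) :
    ∃ N : ℕ, ∀ sj' : FOmega K, (∀ n < N, sj'.1.1 n = sj.1.1 n) →
      sj'.1.2 = sj.1.2 → sj' ∈ V := by
  obtain ⟨W, hW, hWV⟩ := isOpen_induced_iff.mp hV
  have hmem : ((sj.1.1, sj.1.2) : (ℕ → Fin K) × (Fin K → ℕ)) ∈ W := by
    rw [← hWV] at h; exact h
  obtain ⟨U1, U2, hU1, _, hm1, hm2, hsub⟩ := isOpen_prod_iff.mp hW sj.1.1 sj.1.2 hmem
  obtain ⟨I, u, hu, hpi⟩ := isOpen_pi_iff.mp hU1 sj.1.1 hm1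
  refine ⟨I.sup id + 1, fun sj' h1 h2 => ?_⟩
  have hval : (sj'.val : (ℕ → Fin K) × (Fin K → ℕ)) ∈ U1 ×ˢ U2 := by
    refine ⟨?_, ?_⟩
    · apply hpi
      intro a ha
      have : a < I.sup id + 1 := Nat.lt_succ_of_le (Finset.le_sup (f := id) ha)
      have := h1 a this
      show sj'.val.1 a ∈ u a
      rw [this]
      exact (hu a ha).2
    · show sj'.val.2 ∈ U2
      rw [h2]
      exact hm2
  rw [← hWV]
  exact hsub hval

private lemma fomega_stage (K L : ℕ) (hKL : K < L) (t : Fin L → Fin K)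
    (i : Fin K → Fin L) (hti : IsConnectionFin L K t i)
    (V : Set (FOmega K)) (hVo : IsOpen V) (hVd : Dense V)
    (N : ℕ) (hN : L ≤ N) :
    ∃ Mσ : ℕ × (ℕ → Fin K), N ≤ Mσ.1 ∧
      ∀ (s'' : ℕ → Fin K) (h : IsConnectionNat K s'' (fun x => ((i x : Fin L) : ℕ))),
        (∀ y : ℕ, ∀ hy : y < L, s'' y = t ⟨y, hy⟩) →
        (∀ n : ℕ, N ≤ n → n < Mσ.1 → s'' n = Mσ.2 n) →
        (⟨(s'', fun x => ((i x : Fin L) : ℕ)), h⟩ : FOmega K) ∈ V := by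
  have hL0 : 0 < L := lt_of_le_of_lt (Nat.zero_le K) hKL
  suffices H : ∀ l : List (Fin N → Fin K), ∃ M : ℕ, ∃ σ : ℕ → Fin K, N ≤ M ∧
      (∀ y : ℕ, ∀ hy : y < L, σ y = t ⟨y, hy⟩) ∧
      ∀ u ∈ l, ∀ (s'' : ℕ → Fin K) (h : IsConnectionNat K s'' (fun x => ((i x : Fin L) : ℕ))),
        (∀ y : ℕ, ∀ hy : y < L, s'' y = t ⟨y, hy⟩) →
        (∀ k : ℕ, ∀ hk : k < N, s'' k = u ⟨k, hk⟩) →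
        (∀ n : ℕ, N ≤ n → n < M → s'' n = σ n) →
        (⟨(s'', fun x => ((i x : Fin L) : ℕ)), h⟩ : FOmega K) ∈ V by
    obtain ⟨M, σ, hNM, _, hforce⟩ := H (Finset.univ.toList)
    refine ⟨(M, σ), hNM, fun s'' h ht hσ => ?_⟩
    exact hforce (fun k => s'' (k : ℕ)) (Finset.mem_toList.2 (Finset.mem_univ _))
      s'' h ht (fun k hk => rfl) hσ
  intro l
  induction l with
  | nil =>
    refine ⟨N, fun n => if hy : n < L then t ⟨n, hy⟩ else t ⟨0, hL0⟩, le_rfl, ?_, ?_⟩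
    · intro y hy; simp [hy]
    · intro u hu; simp at hu
  | cons u l ih =>
    obtain ⟨M, σ, hNM, hσt, hind⟩ := ih
    -- build the point s_u
    set su : ℕ → Fin K := fun n =>
      if hy : n < L then t ⟨n, hy⟩ else if h2 : n < N then u ⟨n, h2⟩ else σ n with hsu_def
    have hsut : ∀ y : ℕ, ∀ hy : y < L, su y = t ⟨y, hy⟩ := by
      intro y hy; simp [hsu_def, hy]
    have hsuσ : ∀ n : ℕ, N ≤ n → su n = σ n := by
      intro n hn
      have h1 : ¬ n < L := not_lt.2 (le_trans hN hn)
      have h2 : ¬ n < N := not_lt.2 hn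
      simp [hsu_def, h1, h2]
    have hconn := fomega_conn K L hKL t i hti su hsut
    set x0 : FOmega K := ⟨(su, fun x => ((i x : Fin L) : ℕ)), hconn⟩ with hx0
    set C : Set (FOmega K) :=
      {sj : FOmega K | (∀ n < M, sj.1.1 n = su n) ∧ sj.1.2 = (fun x => ((i x : Fin L) : ℕ))}
      with hC
    have hCopen : IsOpen C := fomega_cyl_isOpen K M su _
    have hCne : C.Nonempty := ⟨x0, fun n _ => rfl, rfl⟩
    obtain ⟨sj1, hsj1C, hsj1V⟩ := hVd.inter_open_nonempty C hCopen hCne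
    obtain ⟨M1, hM1⟩ := fomega_exists_cyl K V hVo sj1 hsj1V
    obtain ⟨hsj1s, hsj1i⟩ := hsj1C
    refine ⟨max M1 M, sj1.1.1, le_trans hNM (le_max_right _ _), ?_, ?_⟩
    · intro y hy
      rw [hsj1s y (lt_of_lt_of_le hy (le_trans hN hNM))]
      exact hsut y hy
    · intro u0 hu0 s'' h ht hu' hσ'
      rcases List.mem_cons.mp hu0 with rfl | hu0l
      · -- u0 = u : use the cylinder around sj1
        refine hM1 _ (fun n hn => ?_) hsj1i.symm
        show s'' n = sj1.1.1 n
        by_cases hnN : n < N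
        · rw [hsj1s n (lt_of_lt_of_le hnN hNM)]
          by_cases hnL : n < L
          · rw [ht n hnL, hsut n hnL]
          · rw [hu' n hnN]
            simp [hsu_def, hnL, hnN]
        · exact hσ' n (not_lt.1 hnN) (lt_of_lt_of_le hn (le_max_left _ _))
      · -- u0 ∈ l : use induction hypothesis
        refine hind u0 hu0l s'' h ht hu' (fun n hn1 hn2 => ?_)
        rw [hσ' n hn1 (lt_of_lt_of_le hn2 (le_max_right _ _)),
          hsj1s n hn2, hsuσ n hn1]


/-- for a dense G_δ subset 𝒢 of F_{ω,K} and a fixed finite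
connection (t,i) ∈ F_{L,K}, there is a block sequence (D_p) of finite subsets
of ℕ and surjections f_p : D_p → K such that every (s,j) ∈ F_{ω,K} with
(s↾L, j↾K) = (t,i) whose s extends infinitely many of the f_p lies in 𝒢. -/
theorem dense_Gdelta_block_sequence (K L : ℕ) (hKL : K < L)
    (G : Set (FOmega K)) (hGdense : Dense G) (hGdelta : IsGδ G)
    (t : Fin L → Fin K) (i : Fin K → Fin L) (hti : IsConnectionFin L K t i) :
    ∃ (D : ℕ → Finset ℕ) (f : ℕ → ℕ → Fin K),
      (∀ p, (D p).Nonempty) ∧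
      (∀ p q : ℕ, p < q → ∀ m ∈ D p, ∀ n ∈ D q, m < n) ∧
      (∀ p, ∀ x : Fin K, ∃ n ∈ D p, f p n = x) ∧
      ∀ sj : FOmega K,
        (∀ y : Fin L, sj.1.1 (y : ℕ) = t y) →
        (∀ x : Fin K, sj.1.2 x = ((i x : Fin L) : ℕ)) →
        {p : ℕ | ∀ n ∈ D p, sj.1.1 n = f p n}.Infinite →
        sj ∈ G := by
  rcases Nat.eq_zero_or_pos K with hK | hK
  · -- K = 0 : t ⟨0⟩ : Fin 0 gives a contradiction
    have x : Fin 0 := by rw [← hK]; exact t ⟨0, lt_of_le_of_lt (Nat.zero_le K) hKL⟩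
    exact x.elim0
  -- decompose G as a countable intersection of open dense sets
  obtain ⟨T, hTo, hTc, hGT⟩ := hGdelta
  have hsub : ∀ W ∈ T, G ⊆ W := fun W hW => hGT ▸ Set.sInter_subset_of_mem hW
  obtain ⟨U, hU⟩ := (hTc.insert Set.univ).exists_eq_range ⟨_, Set.mem_insert _ _⟩
  have hUmem : ∀ n, U n ∈ insert Set.univ T := fun n => hU ▸ Set.mem_range_self n
  have hUopen : ∀ n, IsOpen (U n) := by
    intro n
    rcases hUmem n with h | h
    · rw [h]; exact isOpen_univ
    · exact hTo _ h
  have hUdense : ∀ n, Dense (U n) := by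
    intro n
    rcases hUmem n with h | h
    · rw [h]; exact dense_univ
    · exact Dense.mono (hsub _ h) hGdense
  have hGU : G = ⋂ n, U n := by
    rw [← Set.sInter_range, ← hU, Set.sInter_insert, Set.univ_inter, hGT]
  -- finite intersections
  set V : ℕ → Set (FOmega K) := fun n => ⋂ k ∈ Finset.range (n + 1), U k with hV
  have hVopen : ∀ n, IsOpen (V n) :=
    fun n => isOpen_biInter_finset fun k _ => hUopen k
  have hVsucc : ∀ n, V (n + 1) = U (n + 1) ∩ V n := by
    intro n
    rw [hV]
    simp only [Finset.range_add_one, Finset.set_biInter_insert]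
  have hVdense : ∀ n, Dense (V n) := by
    intro n
    induction n with
    | zero => simpa [hV] using hUdense 0
    | succ n ihd =>
      rw [hVsucc n]
      exact (hUdense (n + 1)).inter_of_isOpen_right ihd (hVopen n)
  have hVsub : ∀ n k, k ≤ n → V n ⊆ U k := by
    intro n k hk
    exact Set.biInter_subset_of_mem (Finset.mem_range.2 (Nat.lt_succ_of_le hk))
  -- the stage recursion
  have hstage := fun (p N : ℕ) (hN : L ≤ N) =>
    fomega_stage K L hKL t i hti (V p) (hVopen p) (hVdense p) N hN
  let next : ℕ → ℕ → ℕ × (ℕ → Fin K) := fun p N =>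
    if h : L ≤ N then Classical.choose (hstage p N h) else (N, fun _ => ⟨0, hK⟩)
  let st : ℕ → ℕ × (ℕ × (ℕ → Fin K)) := fun p =>
    Nat.rec (L, next 0 L) (fun p ih => (ih.2.1 + K, next (p + 1) (ih.2.1 + K))) p
  have hst0 : st 0 = (L, next 0 L) := rfl
  have hstS : ∀ p, st (p + 1) = ((st p).2.1 + K, next (p + 1) ((st p).2.1 + K)) :=
    fun p => rfl
  have key : ∀ p, L ≤ (st p).1 ∧ (st p).1 ≤ (st p).2.1 ∧
      ∀ (s'' : ℕ → Fin K) (h : IsConnectionNat K s'' (fun x => ((i x : Fin L) : ℕ))),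
        (∀ y : ℕ, ∀ hy : y < L, s'' y = t ⟨y, hy⟩) →
        (∀ n : ℕ, (st p).1 ≤ n → n < (st p).2.1 → s'' n = (st p).2.2 n) →
        (⟨(s'', fun x => ((i x : Fin L) : ℕ)), h⟩ : FOmega K) ∈ V p := by
    have hgen : ∀ p N (hN : L ≤ N), L ≤ N ∧ N ≤ (next p N).1 ∧
        ∀ (s'' : ℕ → Fin K) (h : IsConnectionNat K s'' (fun x => ((i x : Fin L) : ℕ))),
          (∀ y : ℕ, ∀ hy : y < L, s'' y = t ⟨y, hy⟩) →
          (∀ n : ℕ, N ≤ n → n < (next p N).1 → s'' n = (next p N).2 n) →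
          (⟨(s'', fun x => ((i x : Fin L) : ℕ)), h⟩ : FOmega K) ∈ V p := by
      intro p N hN
      have : next p N = Classical.choose (hstage p N hN) := dif_pos hN
      rw [this]
      exact ⟨hN, (Classical.choose_spec (hstage p N hN)).1,
        (Classical.choose_spec (hstage p N hN)).2⟩
    intro p
    induction p with
    | zero => exact hgen 0 L le_rfl
    | succ p ihp =>
      have hL : L ≤ (st p).2.1 + K := le_trans (le_trans ihp.1 ihp.2.1) (Nat.le_add_right _ _)
      have := hgen (p + 1) ((st p).2.1 + K) hL
      rw [hstS p]
      exact this
  -- monotonicity of the blocks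
  have hmono : ∀ p, (st p).1 < (st (p + 1)).1 := by
    intro p
    rw [hstS p]
    exact lt_of_le_of_lt (key p).2.1 (Nat.lt_add_of_pos_right hK)
  have hmono' : Monotone fun p => (st p).1 :=
    monotone_nat_of_le_succ fun p => le_of_lt (hmono p)
  refine ⟨fun p => Finset.Ico (st p).1 ((st p).2.1 + K),
    fun p n => if n < (st p).2.1 then (st p).2.2 n
      else ⟨(n - (st p).2.1) % K, Nat.mod_lt _ hK⟩, ?_, ?_, ?_, ?_⟩
  · intro p
    exact Finset.nonempty_Ico.2 (lt_of_le_of_lt (key p).2.1 (Nat.lt_add_of_pos_right hK))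
  · intro p q hpq m hm n hn
    rw [Finset.mem_Ico] at hm hn
    have h1 : m < (st (p + 1)).1 := by rw [hstS p]; exact hm.2
    exact lt_of_lt_of_le h1 (le_trans (hmono' hpq) hn.1)
  · intro p x
    refine ⟨(st p).2.1 + (x : ℕ), Finset.mem_Ico.2
      ⟨le_trans (key p).2.1 (Nat.le_add_right _ _), by omega⟩, ?_⟩
    have h1 : ¬ ((st p).2.1 + (x : ℕ) < (st p).2.1) := by omega
    have h2 : (st p).2.1 + (x : ℕ) - (st p).2.1 = (x : ℕ) := by omega
    simp only [if_neg h1]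
    ext
    simp [h2, Nat.mod_eq_of_lt x.isLt]
  · intro sj hst hsi hinf
    have hj : sj.1.2 = (fun x => ((i x : Fin L) : ℕ)) := funext hsi
    have hconn : IsConnectionNat K sj.1.1 (fun x => ((i x : Fin L) : ℕ)) := hj ▸ sj.2
    have hsjeq : sj = (⟨(sj.1.1, fun x => ((i x : Fin L) : ℕ)), hconn⟩ : FOmega K) :=
      Subtype.ext (Prod.ext rfl hj)
    rw [hGU]
    refine Set.mem_iInter.2 fun n => ?_
    obtain ⟨p, hpP, hnp⟩ := hinf.exists_gt n
    have hmemV : sj ∈ V p := by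
      rw [hsjeq]
      refine (key p).2.2 sj.1.1 hconn (fun y hy => ?_) (fun m hm1 hm2 => ?_)
      · exact hst ⟨y, hy⟩
      · have hmD : m ∈ Finset.Ico (st p).1 ((st p).2.1 + K) :=
          Finset.mem_Ico.2 ⟨hm1, by omega⟩
        have := hpP m hmD
        simpa only [if_pos hm2] using this
    exact hVsub p n (le_of_lt hnp) hmemV
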